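/- Geometric decay with probabilistic improvement steps: suppose a nonnegative random process (Φ_t) satisfies Φ_{t+1} ≤ Φ_t always, and whenever Φ_t > 500·OPT, P[Φ_{t+1} ≤ (1 - 1/(100k))Φ_t | Φ_t] ≥ 1/1000. Then after T = 100000·k·ln(Φ_0/(500·OPT)) steps, E[Φ_T] ≤ C·OPT for an absolute constant C (e.g., the expected number of successful steps among T is at least T/1000, and (1-1/(100k))^{T/1000}·Φ_0 ≤ 500·OPT). -/

import Mathlib

open MeasureTheory

/-- Geometric decay with probabilistic improvement steps: there is an absolute constant `C`
such that any nonincreasing nonnegative adapted process `Φ`, starting at the constant `φ0` and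
satisfying that (conditionally on the past) whenever `Φ t > 500·OPT` the next value is at most
`(1 - 1/(100k))·Φ t` with probability at least `1/1000`, has expectation at most `C·OPT`
after `T = ⌈100000·k·ln(φ0/(500·OPT))⌉` steps. -/
theorem geometric_decay_of_probabilistic_improvement :
    ∃ C : ℝ, 0 < C ∧
      ∀ {Ω : Type} {m : MeasurableSpace Ω} (μ : Measure Ω), IsProbabilityMeasure μ →
        ∀ (k : ℕ), 1 ≤ k → ∀ (OPT : ℝ), 0 < OPT →
        ∀ (ℱ : Filtration ℕ m) (Φ : ℕ → Ω → ℝ), Adapted ℱ Φ →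
        (∀ t ω, 0 ≤ Φ t ω) →
        (∀ t ω, Φ (t + 1) ω ≤ Φ t ω) →
        ∀ (φ0 : ℝ), (∀ ω, Φ 0 ω = φ0) →
        (∀ t, ∀ᵐ ω ∂μ, 500 * OPT < Φ t ω →
          (1 : ℝ) / 1000 ≤
            (μ[Set.indicator
                {ω' | Φ (t + 1) ω' ≤ (1 - 1 / (100 * (k : ℝ))) * Φ t ω'}
                (fun _ => (1 : ℝ)) | ℱ t]) ω) →
        ∫ ω, Φ (⌈100000 * (k : ℝ) * Real.log (φ0 / (500 * OPT))⌉₊) ω ∂μ ≤ C * OPT := by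
  refine ⟨1000, by norm_num, ?_⟩
  intro Ω m μ hμ k hk OPT hOPT ℱ Φ hadp hpos hdec φ0 h0 hcond
  have hk1 : (1 : ℝ) ≤ (k : ℝ) := by exact_mod_cast hk
  set δ : ℝ := 1 / (100 * (k : ℝ)) with hδdef
  set B : ℝ := 500 * OPT with hBdef
  have hδ0 : 0 < δ := by positivity
  have hδ1 : δ ≤ 1 := by
    rw [hδdef, div_le_one (by positivity)]
    nlinarith
  have hB : 0 < B := by positivity
  have hΩ : Nonempty Ω := by
    by_contra h
    have h1 := hμ.measure_univ
    rw [Set.univ_eq_empty_iff.mpr (not_nonempty_iff.mp h), measure_empty] at h1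
    exact zero_ne_one h1
  have hφ0 : 0 ≤ φ0 := by
    obtain ⟨ω⟩ := hΩ
    rw [← h0 ω]; exact hpos 0 ω
  -- antitonicity in t and boundedness by φ0
  have hanti : ∀ s t, s ≤ t → ∀ ω, Φ t ω ≤ Φ s ω := by
    intro s t hst ω
    induction t with
    | zero => simp_all
    | succ n ih =>
      rcases Nat.lt_or_ge s (n + 1) with h | h
      · exact (hdec n ω).trans (ih (Nat.lt_succ_iff.mp h))
      · have : s = n + 1 := le_antisymm hst h
        simp [this]
  have hbd : ∀ t ω, Φ t ω ≤ φ0 := fun t ω => by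
    rw [← h0 ω]; exact hanti 0 t (Nat.zero_le t) ω
  have hmeas : ∀ t, StronglyMeasurable[m] (Φ t) := fun t => ((hadp t).mono (ℱ.le t) le_rfl).stronglyMeasurable
  have hint : ∀ t, Integrable (Φ t) μ := fun t =>
    Integrable.mono' (integrable_const φ0) (hmeas t).aestronglyMeasurable
      (Filter.Eventually.of_forall fun ω => by
        rw [Real.norm_eq_abs, abs_of_nonneg (hpos t ω)]; exact hbd t ω)
  -- the improvement event and its indicator
  set A : ℕ → Set Ω := fun t => {ω' | Φ (t + 1) ω' ≤ (1 - δ) * Φ t ω'} with hAdef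
  set g : ℕ → Ω → ℝ := fun t => Set.indicator (A t) (fun _ => (1 : ℝ)) with hgdef
  have hgnn : ∀ t ω, 0 ≤ g t ω := fun t ω =>
    Set.indicator_nonneg (fun _ _ => zero_le_one) ω
  have hgle : ∀ t ω, g t ω ≤ 1 := fun t ω => by
    by_cases h : ω ∈ A t <;> simp [hgdef, h]
  have hAmeas : ∀ t, MeasurableSet (A t) :=
    fun t => measurableSet_le (hmeas (t + 1)).measurable ((hmeas t).measurable.const_mul _)
  have hgmeas : ∀ t, StronglyMeasurable[m] (g t) :=
    fun t => stronglyMeasurable_const.indicator (hAmeas t)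
  have hgint : ∀ t, Integrable (g t) μ := fun t =>
    Integrable.mono' (integrable_const 1) (hgmeas t).aestronglyMeasurable
      (Filter.Eventually.of_forall fun ω => by
        rw [Real.norm_eq_abs, abs_of_nonneg (hgnn t ω)]; exact hgle t ω)
  have hfgint : ∀ t, Integrable (Φ t * g t) μ := fun t =>
    Integrable.mono' (integrable_const φ0)
      ((hmeas t).mul (hgmeas t)).aestronglyMeasurable
      (Filter.Eventually.of_forall fun ω => by
        rw [Pi.mul_apply, Real.norm_eq_abs,
          abs_of_nonneg (mul_nonneg (hpos t ω) (hgnn t ω))]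
        calc Φ t ω * g t ω ≤ Φ t ω * 1 :=
              mul_le_mul_of_nonneg_left (hgle t ω) (hpos t ω)
          _ ≤ φ0 := by rw [mul_one]; exact hbd t ω)
  -- the one-step inequality in expectation
  have step : ∀ t, ∫ ω, Φ (t + 1) ω ∂μ ≤
      (1 - δ / 1000) * ∫ ω, Φ t ω ∂μ + (δ / 1000) * B := by
    intro t
    -- pointwise: Φ (t+1) ≤ Φ t - δ * (Φ t * g t)
    have hpt : ∀ ω, Φ (t + 1) ω ≤ Φ t ω - δ * (Φ t ω * g t ω) := by
      intro ω
      by_cases h : ω ∈ A t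
      · have h1 : g t ω = 1 := by simp [hgdef, h]
        have h2 : Φ (t + 1) ω ≤ (1 - δ) * Φ t ω := h
        rw [h1, mul_one]; nlinarith
      · have h1 : g t ω = 0 := by simp [hgdef, h]
        rw [h1, mul_zero, mul_zero, sub_zero]; exact hdec t ω
    have hint1 : Integrable (fun ω => Φ t ω - δ * (Φ t ω * g t ω)) μ :=
      (hint t).sub ((hfgint t).const_mul δ)
    have h1 : ∫ ω, Φ (t + 1) ω ∂μ ≤ ∫ ω, (Φ t ω - δ * (Φ t ω * g t ω)) ∂μ :=
      integral_mono (hint (t + 1)) hint1 hpt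
    have h2 : ∫ ω, (Φ t ω - δ * (Φ t ω * g t ω)) ∂μ =
        ∫ ω, Φ t ω ∂μ - δ * ∫ ω, Φ t ω * g t ω ∂μ := by
      have e1 := integral_sub (hint t) ((hfgint t).const_mul δ)
      have e2 := integral_const_mul δ (fun ω => Φ t ω * g t ω) (μ := μ)
      simp only [Pi.sub_apply, Pi.mul_apply] at e1
      rw [e1, e2]
    -- lower bound on ∫ Φ t * g t via conditioning
    have hpull : μ[Φ t * g t | ℱ t] =ᵐ[μ] Φ t * μ[g t | ℱ t] :=
      condExp_mul_of_stronglyMeasurable_left (hadp t).stronglyMeasurable (hfgint t) (hgint t)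
    have hcnn : 0 ≤ᵐ[μ] μ[g t | ℱ t] :=
      condExp_nonneg (Filter.Eventually.of_forall fun ω => hgnn t ω)
    have h3 : ∫ ω, Φ t ω * g t ω ∂μ = ∫ ω, Φ t ω * (μ[g t | ℱ t]) ω ∂μ := by
      have e1 : ∫ ω, Φ t ω * g t ω ∂μ = ∫ ω, (Φ t * g t) ω ∂μ := rfl
      rw [e1, ← integral_condExp (ℱ.le t)]
      exact integral_congr_ae hpull
    have hce_int : Integrable (fun ω => Φ t ω * (μ[g t | ℱ t]) ω) μ :=
      integrable_condExp.bdd_mul (hmeas t).aestronglyMeasurable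
        (c := φ0) (Filter.Eventually.of_forall fun ω => by
          rw [Real.norm_eq_abs, abs_of_nonneg (hpos t ω)]; exact hbd t ω)
    have h4 : (1 / 1000 : ℝ) * (∫ ω, Φ t ω ∂μ - B) ≤ ∫ ω, Φ t ω * g t ω ∂μ := by
      rw [h3]
      have hae : ∀ᵐ ω ∂μ, (1 / 1000 : ℝ) * (Φ t ω - B) ≤
          Φ t ω * (μ[g t | ℱ t]) ω := by
        filter_upwards [hcond t, hcnn] with ω h1000 hnn
        rcases le_or_gt (Φ t ω) B with h | h
        · have : 0 ≤ Φ t ω * (μ[g t | ℱ t]) ω := mul_nonneg (hpos t ω) hnn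
          nlinarith
        · have h5 : (1 / 1000 : ℝ) ≤ (μ[g t | ℱ t]) ω := h1000 h
          have h6 : Φ t ω * (1 / 1000 : ℝ) ≤ Φ t ω * (μ[g t | ℱ t]) ω :=
            mul_le_mul_of_nonneg_left h5 (hpos t ω)
          nlinarith
      have := integral_mono_ae
        ((((hint t).sub (integrable_const B)).const_mul (1 / 1000 : ℝ))) hce_int hae
      calc (1 / 1000 : ℝ) * (∫ ω, Φ t ω ∂μ - B)
          = ∫ ω, (1 / 1000 : ℝ) * (Φ t ω - B) ∂μ := by
            rw [integral_const_mul, integral_sub (hint t) (integrable_const B),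
              integral_const]
            simp [hμ.measure_univ]
        _ ≤ _ := this
    have hδnn : (0 : ℝ) ≤ δ := le_of_lt hδ0
    nlinarith [h1, h2, h4]
  -- iterate: E[Φ t] ≤ (1 - a)^t * φ0 + B with a = δ/1000
  set a : ℝ := δ / 1000 with hadef
  have ha0 : 0 < a := by positivity
  have ha1 : a ≤ 1 := by rw [hadef]; linarith
  have hx0 : ∫ ω, Φ 0 ω ∂μ = φ0 := by
    have : (fun ω => Φ 0 ω) = fun _ => φ0 := funext h0
    rw [this, integral_const]; simp [hμ.measure_univ]
  have hiter : ∀ t, ∫ ω, Φ t ω ∂μ ≤ (1 - a) ^ t * φ0 + B := by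
    intro t
    induction t with
    | zero => simp [hx0]; linarith
    | succ n ih =>
      have h1 := step n
      have h2 : (1 - a) * ∫ ω, Φ n ω ∂μ ≤ (1 - a) * ((1 - a) ^ n * φ0 + B) :=
        mul_le_mul_of_nonneg_left ih (by linarith)
      calc ∫ ω, Φ (n + 1) ω ∂μ ≤ (1 - a) * ∫ ω, Φ n ω ∂μ + a * B := h1
        _ ≤ (1 - a) * ((1 - a) ^ n * φ0 + B) + a * B := by linarith
        _ = (1 - a) ^ (n + 1) * φ0 + B := by ring
  set T : ℕ := ⌈100000 * (k : ℝ) * Real.log (φ0 / (500 * OPT))⌉₊ with hTdef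
  rcases le_or_gt φ0 B with hcase | hcase
  · -- already small: use monotonicity
    have h1 : ∫ ω, Φ T ω ∂μ ≤ ∫ ω, Φ 0 ω ∂μ :=
      integral_mono (hint T) (hint 0) (hanti 0 T (Nat.zero_le T))
    rw [hx0] at h1
    calc ∫ ω, Φ T ω ∂μ ≤ φ0 := h1
      _ ≤ B := hcase
      _ ≤ 1000 * OPT := by rw [hBdef]; linarith
  · -- need the decay
    have hL : 0 < Real.log (φ0 / (500 * OPT)) := by
      apply Real.log_pos
      rw [lt_div_iff₀ (by positivity)]
      linarith [hcase]
    have hTge : 100000 * (k : ℝ) * Real.log (φ0 / (500 * OPT)) ≤ (T : ℝ) :=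
      Nat.le_ceil _
    have haT : Real.log (φ0 / (500 * OPT)) ≤ a * (T : ℝ) := by
      have hak : a * (100000 * (k : ℝ)) = 1 := by
        rw [hadef, hδdef]; field_simp; ring
      calc Real.log (φ0 / (500 * OPT))
          = a * (100000 * (k : ℝ) * Real.log (φ0 / (500 * OPT))) := by
            rw [← mul_assoc, hak, one_mul]
        _ ≤ a * (T : ℝ) := mul_le_mul_of_nonneg_left hTge (le_of_lt ha0)
    have hdecay : (1 - a) ^ T * φ0 ≤ B := by
      have h1 : (1 - a) ≤ Real.exp (-a) := by
        have := Real.add_one_le_exp (-a); linarith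
      have h2 : (1 - a) ^ T ≤ Real.exp (-a) ^ T :=
        pow_le_pow_left₀ (by linarith) h1 T
      have h3 : Real.exp (-a) ^ T = Real.exp (-(a * T)) := by
        rw [← Real.exp_nat_mul]; ring_nf
      have h4 : Real.exp (-(a * T)) ≤ Real.exp (-Real.log (φ0 / (500 * OPT))) :=
        Real.exp_le_exp.mpr (by linarith)
      have hφ0' : 0 < φ0 := lt_trans hB hcase
      have h5 : Real.exp (-Real.log (φ0 / (500 * OPT))) = (500 * OPT) / φ0 := by
        rw [← Real.log_inv, Real.exp_log (inv_pos.mpr (div_pos hφ0' (by positivity))),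
          inv_div]
      have h6 : (1 - a) ^ T ≤ (500 * OPT) / φ0 := by
        calc (1 - a) ^ T ≤ Real.exp (-a) ^ T := h2
          _ = Real.exp (-(a * T)) := h3
          _ ≤ Real.exp (-Real.log (φ0 / (500 * OPT))) := h4
          _ = (500 * OPT) / φ0 := h5
      calc (1 - a) ^ T * φ0 ≤ ((500 * OPT) / φ0) * φ0 :=
            mul_le_mul_of_nonneg_right h6 hφ0
        _ = 500 * OPT := by field_simp
        _ = B := hBdef.symm
    calc ∫ ω, Φ T ω ∂μ ≤ (1 - a) ^ T * φ0 + B := hiter T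
      _ ≤ B + B := by linarith
      _ ≤ 1000 * OPT := by rw [hBdef]; linarith
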